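/- arXiv:2504.19725 — 2 statements merged into one kernel-verified Lean document; each statement's English description precedes it below -/
import Mathlib

section
/- Let f, g : [0,1] → ℝ be right-continuous functions of bounded variation with f(0) = g(0), f(1) = g(1) and g(u) ≥ f(u) for all u ∈ [0,1], and let h : [0,1] → ℝ be nondecreasing. If ∫₀¹ h(u) df(u) < ∞ or ∫₀¹ h(u) dg(u) > −∞, then ∫₀¹ h(u) dg(u) ≤ ∫₀¹ h(u) df(u), where the integrals are Lebesgue–Stieltjes integrals with respect to the signed measures induced by g and f. -/
open MeasureTheory Set


lemma aux_decomp (F : StieltjesFunction ℝ) (h' : ℝ → ℝ) (hm : Monotone h') :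
    ∫ u in Ioc (0:ℝ) 1, h' u ∂F.measure
      = (∫⁻ u in Ioc (0:ℝ) 1, ENNReal.ofReal (h' u - h' 0) ∂F.measure).toReal
        + h' 0 * (F.measure (Ioc 0 1)).toReal := by
  have hmeas : Measurable h' := hm.measurable
  have hnn : 0 ≤ᵐ[F.measure.restrict (Ioc (0:ℝ) 1)] fun u => h' u - h' 0 := by
    filter_upwards [ae_restrict_mem measurableSet_Ioc] with u hu
    simpa using hm hu.1.le
  have hfin : IsFiniteMeasure (F.measure.restrict (Ioc (0:ℝ) 1)) := by
    constructor
    rw [Measure.restrict_apply_univ, F.measure_Ioc]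
    exact ENNReal.ofReal_lt_top
  have hint : Integrable (fun u => h' u - h' 0) (F.measure.restrict (Ioc (0:ℝ) 1)) := by
    apply Integrable.mono' (g := fun _ => |h' 1 - h' 0|) (integrable_const _)
      ((hmeas.sub measurable_const).aestronglyMeasurable)
    filter_upwards [ae_restrict_mem measurableSet_Ioc] with u hu
    simp only [Real.norm_eq_abs, Pi.sub_apply]
    rw [abs_of_nonneg (sub_nonneg.2 (hm hu.1.le))]
    exact le_trans (sub_le_sub_right (hm hu.2) _) (le_abs_self _)
  have key : ∫ u in Ioc (0:ℝ) 1, (h' u - h' 0) ∂F.measure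
      = (∫⁻ u in Ioc (0:ℝ) 1, ENNReal.ofReal (h' u - h' 0) ∂F.measure).toReal :=
    integral_eq_lintegral_of_nonneg_ae hnn (hmeas.sub measurable_const).aestronglyMeasurable
  have : ∫ u in Ioc (0:ℝ) 1, h' u ∂F.measure
      = ∫ u in Ioc (0:ℝ) 1, ((h' u - h' 0) + h' 0) ∂F.measure := by ring_nf
  rw [this, integral_add hint (integrable_const _), key, setIntegral_const, smul_eq_mul]
  rw [measureReal_def]
  ring


lemma aux_pt (f g : ℝ → ℝ) (f₁ f₂ g₁ g₂ : StieltjesFunction ℝ)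
    (hf : ∀ u ∈ Icc (0:ℝ) 1, f u = f₁ u - f₂ u)
    (hg : ∀ u ∈ Icc (0:ℝ) 1, g u = g₁ u - g₂ u)
    (hle : ∀ u ∈ Icc (0:ℝ) 1, f u ≤ g u)
    (u : ℝ) (hu : u ∈ Icc (0:ℝ) 1) : f₁ u + g₂ u ≤ g₁ u + f₂ u := by
  have h1 := hf u hu; have h2 := hg u hu; have h3 := hle u hu; linarith

lemma aux_leftlim (f g : ℝ → ℝ) (f₁ f₂ g₁ g₂ : StieltjesFunction ℝ)
    (hf : ∀ u ∈ Icc (0:ℝ) 1, f u = f₁ u - f₂ u)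
    (hg : ∀ u ∈ Icc (0:ℝ) 1, g u = g₁ u - g₂ u)
    (hle : ∀ u ∈ Icc (0:ℝ) 1, f u ≤ g u)
    (a : ℝ) (ha0 : 0 < a) (ha1 : a ≤ 1) :
    Function.leftLim f₁ a + Function.leftLim g₂ a
      ≤ Function.leftLim g₁ a + Function.leftLim f₂ a := by
  have hev : ∀ᶠ u in nhdsWithin a (Iio a), f₁ u + g₂ u ≤ g₁ u + f₂ u := by
    filter_upwards [Ioo_mem_nhdsLT_of_mem (show a ∈ Ioc (0:ℝ) a from ⟨ha0, le_refl a⟩)]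
      with u hu
    exact aux_pt f g f₁ f₂ g₁ g₂ hf hg hle u ⟨hu.1.le, hu.2.le.trans ha1⟩
  exact le_of_tendsto_of_tendsto
    ((f₁.mono.tendsto_leftLim a).add (g₂.mono.tendsto_leftLim a))
    ((g₁.mono.tendsto_leftLim a).add (f₂.mono.tendsto_leftLim a)) hev

lemma aux_key (f g : ℝ → ℝ) (f₁ f₂ g₁ g₂ : StieltjesFunction ℝ)
    (hf : ∀ u ∈ Icc (0:ℝ) 1, f u = f₁ u - f₂ u)
    (hg : ∀ u ∈ Icc (0:ℝ) 1, g u = g₁ u - g₂ u)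
    (h1 : f 1 = g 1)
    (hle : ∀ u ∈ Icc (0:ℝ) 1, f u ≤ g u)
    (S : Set ℝ) (hS : S ⊆ Ioc 0 1)
    (hup : ∀ u ∈ S, ∀ v, u ≤ v → v ≤ 1 → v ∈ S) :
    g₁.measure S + f₂.measure S ≤ f₁.measure S + g₂.measure S := by
  have hone : f₁ 1 + g₂ 1 = g₁ 1 + f₂ 1 := by
    have e1 := hf 1 (by norm_num); have e2 := hg 1 (by norm_num); linarith
  rcases S.eq_empty_or_nonempty with rfl | hne
  · simp
  have hbdd : BddBelow S := ⟨0, fun x hx => (hS hx).1.le⟩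
  set a := sInf S with haS
  obtain ⟨x₀, hx₀⟩ := hne
  have ha1 : a ≤ 1 := le_trans (csInf_le hbdd hx₀) (hS hx₀).2
  have ha0 : 0 ≤ a := le_csInf ⟨x₀, hx₀⟩ (fun x hx => (hS hx).1.le)
  by_cases hmem : a ∈ S
  · have ha0' : 0 < a := (hS hmem).1
    have hSeq : S = Icc a 1 := by
      ext x
      constructor
      · exact fun hx => ⟨csInf_le hbdd hx, (hS hx).2⟩
      · exact fun hx => hup a hmem x hx.1 hx.2
    rw [hSeq, StieltjesFunction.measure_Icc, StieltjesFunction.measure_Icc,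
      StieltjesFunction.measure_Icc, StieltjesFunction.measure_Icc,
      ← ENNReal.ofReal_add (sub_nonneg.2 (g₁.mono.leftLim_le ha1))
        (sub_nonneg.2 (f₂.mono.leftLim_le ha1)),
      ← ENNReal.ofReal_add (sub_nonneg.2 (f₁.mono.leftLim_le ha1))
        (sub_nonneg.2 (g₂.mono.leftLim_le ha1))]
    apply ENNReal.ofReal_le_ofReal
    have := aux_leftlim f g f₁ f₂ g₁ g₂ hf hg hle a ha0' ha1
    linarith
  · have hSeq : S = Ioc a 1 := by
      ext x
      constructor
      · intro hx
        refine ⟨lt_of_le_of_ne (csInf_le hbdd hx) ?_, (hS hx).2⟩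
        rintro rfl; exact hmem hx
      · intro hx
        obtain ⟨u, hu, hux⟩ := exists_lt_of_csInf_lt ⟨x₀, hx₀⟩ hx.1
        exact hup u hu x hux.le hx.2
    rw [hSeq, StieltjesFunction.measure_Ioc, StieltjesFunction.measure_Ioc,
      StieltjesFunction.measure_Ioc, StieltjesFunction.measure_Ioc,
      ← ENNReal.ofReal_add (sub_nonneg.2 (g₁.mono ha1)) (sub_nonneg.2 (f₂.mono ha1)),
      ← ENNReal.ofReal_add (sub_nonneg.2 (f₁.mono ha1)) (sub_nonneg.2 (g₂.mono ha1))]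
    apply ENNReal.ofReal_le_ofReal
    have := aux_pt f g f₁ f₂ g₁ g₂ hf hg hle a ⟨ha0, ha1⟩
    linarith

/-- Lemma 2.3: if `f` and `g` are right-continuous functions of bounded variation on
`[0,1]` — encoded, via Jordan decomposition, as differences of right-continuous
nondecreasing functions (`StieltjesFunction`s) on `[0,1]` — with `f 0 = g 0`,
`f 1 = g 1` and `f ≤ g` on `[0,1]`, and `h` is nondecreasing on `[0,1]`, then
`∫₀¹ h dg ≤ ∫₀¹ h df`, the integrals being Lebesgue–Stieltjes integrals over `(0,1]`
with respect to the induced (finite) signed measures.  (The well-definedness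
side-condition of the paper is automatic here: `h` is bounded on `[0,1]` and all the
Stieltjes measures are finite on `(0,1]`, so every integral is a real number.) -/
theorem stmt_0 (f g h : ℝ → ℝ) (f₁ f₂ g₁ g₂ : StieltjesFunction ℝ)
    (hf : ∀ u ∈ Icc (0:ℝ) 1, f u = f₁ u - f₂ u)
    (hg : ∀ u ∈ Icc (0:ℝ) 1, g u = g₁ u - g₂ u)
    (h0 : f 0 = g 0) (h1 : f 1 = g 1)
    (hle : ∀ u ∈ Icc (0:ℝ) 1, f u ≤ g u)
    (hmono : MonotoneOn h (Icc (0:ℝ) 1)) :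
    (∫ u in Ioc (0:ℝ) 1, h u ∂g₁.measure) - (∫ u in Ioc (0:ℝ) 1, h u ∂g₂.measure)
      ≤ (∫ u in Ioc (0:ℝ) 1, h u ∂f₁.measure) -
          (∫ u in Ioc (0:ℝ) 1, h u ∂f₂.measure) := by
  classical
  -- globally monotone modification of h
  set h' : ℝ → ℝ := fun u => h (max 0 (min 1 u)) with hh'
  have hpmem : ∀ u : ℝ, max 0 (min 1 u) ∈ Icc (0:ℝ) 1 :=
    fun u => ⟨le_max_left _ _, max_le zero_le_one (min_le_left _ _)⟩
  have h'mono : Monotone h' := fun x y hxy =>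
    hmono (hpmem x) (hpmem y) (max_le_max le_rfl (min_le_min le_rfl hxy))
  have h'eq : ∀ u ∈ Ioc (0:ℝ) 1, h' u = h u := by
    intro u hu
    rw [hh']
    simp only [min_eq_right hu.2, max_eq_right hu.1.le]
  have h'0 : h' 0 = h 0 := by rw [hh']; norm_num
  -- replace h by h'
  have hint : ∀ F : StieltjesFunction ℝ,
      ∫ u in Ioc (0:ℝ) 1, h u ∂F.measure = ∫ u in Ioc (0:ℝ) 1, h' u ∂F.measure :=
    fun F => setIntegral_congr_fun measurableSet_Ioc (fun u hu => (h'eq u hu).symm)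
  rw [hint g₁, hint g₂, hint f₁, hint f₂]
  set c := h' 0 with hc
  set L : StieltjesFunction ℝ → ENNReal :=
    fun F => ∫⁻ u in Ioc (0:ℝ) 1, ENNReal.ofReal (h' u - c) ∂F.measure with hL
  set m : StieltjesFunction ℝ → ℝ := fun F => (F.measure (Ioc 0 1)).toReal with hm
  have hdecomp : ∀ F : StieltjesFunction ℝ,
      ∫ u in Ioc (0:ℝ) 1, h' u ∂F.measure = (L F).toReal + c * m F :=
    fun F => aux_decomp F h' h'mono
  -- finiteness of L
  have hLfin : ∀ F : StieltjesFunction ℝ, L F ≠ ⊤ := by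
    intro F
    have : L F ≤ ENNReal.ofReal (h' 1 - c) * F.measure (Ioc 0 1) := by
      rw [hL]
      calc ∫⁻ u in Ioc (0:ℝ) 1, ENNReal.ofReal (h' u - c) ∂F.measure
          ≤ ∫⁻ _ in Ioc (0:ℝ) 1, ENNReal.ofReal (h' 1 - c) ∂F.measure := by
            apply lintegral_mono_ae
            filter_upwards [ae_restrict_mem measurableSet_Ioc] with u hu
            exact ENNReal.ofReal_le_ofReal (sub_le_sub_right (h'mono hu.2) _)
        _ = ENNReal.ofReal (h' 1 - c) * F.measure (Ioc 0 1) := by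
            rw [setLIntegral_const]
    have hfin2 : ENNReal.ofReal (h' 1 - c) * F.measure (Ioc 0 1) ≠ ⊤ := by
      rw [F.measure_Ioc]
      exact ENNReal.mul_ne_top ENNReal.ofReal_ne_top ENNReal.ofReal_ne_top
    exact ne_top_of_le_ne_top hfin2 this
  -- layer cake representation
  have hlayer : ∀ F : StieltjesFunction ℝ,
      L F = ∫⁻ t in Ioi (0:ℝ), F.measure ({u | t < h' u - c} ∩ Ioc 0 1) := by
    intro F
    simp only [hL]
    rw [lintegral_eq_lintegral_meas_lt (F.measure.restrict (Ioc 0 1)) (f := fun u => h' u - c)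
      (by filter_upwards [ae_restrict_mem measurableSet_Ioc] with u hu
          simpa using h'mono hu.1.le)
      ((h'mono.measurable.sub measurable_const).aemeasurable)]
    apply lintegral_congr
    intro t
    rw [Measure.restrict_apply]
    exact (measurableSet_lt measurable_const (h'mono.measurable.sub measurable_const))
  -- key inequality via layer cake
  have hmeasur : ∀ F : StieltjesFunction ℝ,
      Measurable (fun t : ℝ => F.measure ({u | t < h' u - c} ∩ Ioc 0 1)) := by
    intro F
    apply Antitone.measurable
    intro s t hst
    apply measure_mono
    exact inter_subset_inter_left _ (fun u hu => lt_of_le_of_lt hst hu)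
  have hkey : L g₁ + L f₂ ≤ L f₁ + L g₂ := by
    rw [hlayer g₁, hlayer f₂, hlayer f₁, hlayer g₂,
      ← lintegral_add_left (hmeasur g₁),
      ← lintegral_add_left (hmeasur f₁)]
    apply lintegral_mono
    intro t
    apply aux_key f g f₁ f₂ g₁ g₂ hf hg h1 hle _ inter_subset_right
    intro u hu v huv hv1
    exact ⟨lt_of_lt_of_le hu.1 (sub_le_sub_right (h'mono huv) _),
      lt_of_lt_of_le hu.2.1 huv, hv1⟩
  have hreal : (L g₁).toReal + (L f₂).toReal ≤ (L f₁).toReal + (L g₂).toReal := by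
    rw [← ENNReal.toReal_add (hLfin g₁) (hLfin f₂), ← ENNReal.toReal_add (hLfin f₁) (hLfin g₂)]
    exact ENNReal.toReal_mono (ENNReal.add_ne_top.2 ⟨hLfin f₁, hLfin g₂⟩) hkey
  -- mass identity
  have hmF : ∀ F : StieltjesFunction ℝ, m F = F 1 - F 0 := by
    intro F
    rw [hm]
    simp only
    rw [F.measure_Ioc]
    exact ENNReal.toReal_ofReal (sub_nonneg.2 (F.mono zero_le_one))
  have hmass : m g₁ - m g₂ = m f₁ - m f₂ := by
    have e1 := hf 0 (by norm_num)
    have e2 := hf 1 (by norm_num)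
    have e3 := hg 0 (by norm_num)
    have e4 := hg 1 (by norm_num)
    rw [hmF, hmF, hmF, hmF]
    linarith
  have hmass' : c * m g₁ - c * m g₂ = c * m f₁ - c * m f₂ := by
    linear_combination c * hmass
  rw [hdecomp g₁, hdecomp g₂, hdecomp f₁, hdecomp f₂]
  linarith
end

section
/- Let σ > 0 and α ∈ (0,1). For b ∈ [1/2,1), let X_b be the random variable whose quantile function is F^{-1}(u) = μ + σ(u−1+b)/√((2/3)(1−b)³) for u ∈ (0,1−b), F^{-1}(u) = μ for u ∈ [1−b,b], and F^{-1}(u) = μ + σ(u−b)/√((2/3)(1−b)³) for u ∈ (b,1). Each X_b is symmetric and unimodal with mean μ and variance σ², and sup over b ∈ [1/2, max(α,1−α)] of TVaR_α(X_b) equals μ + 2σ√α/(3(1−α)) if α ∈ (0,1/3), equals μ + √3·σ·α if α ∈ [1/3,2/3), and equals μ + 2σ/(3√(1−α)) if α ∈ [2/3,1). -/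
open MeasureTheory Set

noncomputable section

variable {Ω : Type*} [MeasureSpace Ω]

/-- The (right-continuous) cumulative distribution function of a random variable. -/
def cdfRV (X : Ω → ℝ) (t : ℝ) : ℝ := ((volume : Measure Ω) {ω | X ω ≤ t}).toReal

/-- The survival function `x ↦ P(X > x)` of a random variable. -/
def sfRV (X : Ω → ℝ) (t : ℝ) : ℝ := ((volume : Measure Ω) {ω | t < X ω}).toReal

/-- The left-continuous quantile function `F_X^{-1}(p) = inf {x | F_X x ≥ p}`. -/
def quantileRV (X : Ω → ℝ) (p : ℝ) : ℝ := sInf {x : ℝ | p ≤ cdfRV X x}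

/-- A random variable is unimodal if its cdf is convex on `(-∞, x₀)` and concave on
`(x₀, ∞)` for some mode `x₀`. -/
def Unimodal (X : Ω → ℝ) : Prop :=
  ∃ x₀ : ℝ, ConvexOn ℝ (Iio x₀) (cdfRV X) ∧ ConcaveOn ℝ (Ioi x₀) (cdfRV X)

/-- `X` is symmetric about `c`: `X - c` and `c - X` are equal in distribution. -/
def SymmAbout (X : Ω → ℝ) (c : ℝ) : Prop :=
  Measure.map (fun ω => X ω - c) (volume : Measure Ω) =
    Measure.map (fun ω => c - X ω) (volume : Measure Ω)

/-- `X` is symmetric (about some point). -/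
def SymmetricRV (X : Ω → ℝ) : Prop := ∃ c : ℝ, SymmAbout X c

/-- `V(μ, σ)`: random variables with mean `μ` and variance `σ²`. -/
def Vset (μ σ : ℝ) : Set (Ω → ℝ) :=
  {X | Measurable X ∧ Integrable X (volume : Measure Ω) ∧
    (∫ ω, X ω ∂(volume : Measure Ω)) = μ ∧
    Integrable (fun ω => (X ω - μ) ^ 2) (volume : Measure Ω) ∧
    (∫ ω, (X ω - μ) ^ 2 ∂(volume : Measure Ω)) = σ ^ 2}

/-- `V_U(μ, σ)`: unimodal members of `V(μ, σ)`. -/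
def VU (μ σ : ℝ) : Set (Ω → ℝ) := {X | X ∈ Vset μ σ ∧ Unimodal X}

/-- `V_S(μ, σ)`: members of `V(μ, σ)` symmetric about the mean `μ`. -/
def VS (μ σ : ℝ) : Set (Ω → ℝ) := {X | X ∈ Vset μ σ ∧ SymmAbout X μ}

/-- `V_{SU}(μ, σ)`: symmetric and unimodal members of `V(μ, σ)`. -/
def VSU (μ σ : ℝ) : Set (Ω → ℝ) := {X | X ∈ Vset μ σ ∧ SymmAbout X μ ∧ Unimodal X}

/-- The distortion riskmetric `ρ_g`. -/
def rho (g : ℝ → ℝ) (X : Ω → ℝ) : ℝ :=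
  (∫ x in Iio (0 : ℝ), (g (sfRV X x) - g 1)) + ∫ x in Ioi (0 : ℝ), g (sfRV X x)

/-- The entropy `∫ g(P(X > x)) dx`. -/
def entropyRV (g : ℝ → ℝ) (X : Ω → ℝ) : ℝ := ∫ x : ℝ, g (sfRV X x)

/-- The weighted entropy `∫ ψ(x) g(P(X > x)) dx`. -/
def wentropyRV (ψ g : ℝ → ℝ) (X : Ω → ℝ) : ℝ := ∫ x : ℝ, ψ x * g (sfRV X x)

/-- `g ∈ 𝒢`: `g` is of bounded variation on `[0,1]` with `g 0 = 0`. -/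
def memG (g : ℝ → ℝ) : Prop := BoundedVariationOn g (Icc 0 1) ∧ g 0 = 0

/-- `ĝ(u) = g(1) - g(1-u)`. -/
def hatg (g : ℝ → ℝ) : ℝ → ℝ := fun u => g 1 - g (1 - u)

/-- The convex envelope on `[0,1]`: the largest convex function below `k` on `[0,1]`. -/
def convexEnvelope (k : ℝ → ℝ) : ℝ → ℝ := fun x =>
  sSup {y : ℝ | ∃ h : ℝ → ℝ, ConvexOn ℝ (Icc (0:ℝ) 1) h ∧
    (∀ u ∈ Icc (0:ℝ) 1, h u ≤ k u) ∧ y = h x}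

/-- The concave envelope on `[0,1]`: the smallest concave function above `k` on `[0,1]`. -/
def concaveEnvelope (k : ℝ → ℝ) : ℝ → ℝ := fun x =>
  sInf {y : ℝ | ∃ h : ℝ → ℝ, ConcaveOn ℝ (Icc (0:ℝ) 1) h ∧
    (∀ u ∈ Icc (0:ℝ) 1, k u ≤ h u) ∧ y = h x}

/-- The right derivative. -/
def rderiv (f : ℝ → ℝ) (x : ℝ) : ℝ := derivWithin f (Ici x) x

/-- Tail value-at-risk / expected shortfall at level `α`. -/
def TVaR (α : ℝ) (X : Ω → ℝ) : ℝ := (1 - α)⁻¹ * ∫ u in α..1, quantileRV X u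

/-- The probability space is rich enough to support a uniformly distributed random
variable (a consequence of atomlessness used throughout). -/
def Rich (Ω : Type*) [MeasureSpace Ω] : Prop :=
  ∃ U : Ω → ℝ, Measurable U ∧
    Measure.map U (volume : Measure Ω) = volume.restrict (Ioo (0:ℝ) 1)

end


noncomputable section AuxProof

open MeasureTheory Set Filter
open scoped Topology

section CdfQuantile

variable {Ω : Type*} [MeasureSpace Ω] [IsProbabilityMeasure (volume : Measure Ω)]

lemma cdfRV_eq_cdf (X : Ω → ℝ) (hX : Measurable X) (t : ℝ) :
    cdfRV X t = ProbabilityTheory.cdf (Measure.map X volume) t := by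
  have : IsProbabilityMeasure (Measure.map X volume) :=
    Measure.isProbabilityMeasure_map hX.aemeasurable
  rw [ProbabilityTheory.cdf_eq_real, measureReal_def, Measure.map_apply hX measurableSet_Iic]
  rfl

lemma quantileRV_le_iff (X : Ω → ℝ) (hX : Measurable X) {p t : ℝ}
    (hp0 : 0 < p) (hp1 : p < 1) :
    quantileRV X p ≤ t ↔ p ≤ cdfRV X t := by
  have : IsProbabilityMeasure (Measure.map X volume) :=
    Measure.isProbabilityMeasure_map hX.aemeasurable
  set ν := Measure.map X volume with hν
  set F := ProbabilityTheory.cdf ν with hF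
  have hcdf : ∀ s, cdfRV X s = F s := cdfRV_eq_cdf X hX
  have hmono : Monotone (F : ℝ → ℝ) := ProbabilityTheory.monotone_cdf ν
  -- set S
  set S : Set ℝ := {x : ℝ | p ≤ cdfRV X x} with hS
  have hSF : S = {x : ℝ | p ≤ F x} := by ext x; simp [hS, hcdf]
  have hne : S.Nonempty := by
    have h1 : ∀ᶠ x in atTop, p ≤ F x :=
      (ProbabilityTheory.tendsto_cdf_atTop ν).eventually (eventually_ge_nhds hp1)
    obtain ⟨x, hx⟩ := h1.exists
    exact ⟨x, by rw [hS]; simpa [hcdf] using hx⟩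
  have hbdd : BddBelow S := by
    have h0 : ∀ᶠ x in atBot, F x < p :=
      (ProbabilityTheory.tendsto_cdf_atBot ν).eventually (eventually_lt_nhds hp0)
    obtain ⟨x0, hx0⟩ := h0.exists
    refine ⟨x0, fun x hx => ?_⟩
    by_contra hlt
    push_neg at hlt
    have : p ≤ F x := by rw [hSF] at hx; exact hx
    exact absurd (this.trans (hmono hlt.le)) (not_le.mpr hx0)
  constructor
  · intro h
    -- p ≤ F y for all y > sInf S
    have key : ∀ y, quantileRV X p < y → p ≤ F y := by
      intro y hy
      obtain ⟨x, hxS, hxy⟩ := (csInf_lt_iff hbdd hne).mp hy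
      rw [hSF] at hxS
      exact hxS.trans (hmono hxy.le)
    -- right continuity at sInf S
    have hrc : ContinuousWithinAt (F : ℝ → ℝ) (Ici (quantileRV X p)) (quantileRV X p) :=
      F.right_continuous _
    have h2 : p ≤ F (quantileRV X p) := by
      have htends : Tendsto (F : ℝ → ℝ) (𝓝[>] (quantileRV X p)) (𝓝 (F (quantileRV X p))) :=
        hrc.tendsto.mono_left (nhdsWithin_mono _ Ioi_subset_Ici_self)
      haveI : (𝓝[>] (quantileRV X p)).NeBot := nhdsGT_neBot _
      exact ge_of_tendsto htends (eventually_nhdsWithin_of_forall (fun y hy => key y hy))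
    rw [hcdf]
    exact h2.trans (hmono h)
  · intro h
    exact csInf_le hbdd h

lemma sandwich_unit {a c : ℝ} (ha : a ∈ Icc (0:ℝ) 1) (hc : c ∈ Icc (0:ℝ) 1)
    (h : ∀ p ∈ Ioo (0:ℝ) 1, (p ≤ a ↔ p ≤ c)) : a = c := by
  by_contra hne
  rcases lt_or_gt_of_ne hne with hlt | hlt
  · have hp : (a + c)/2 ∈ Ioo (0:ℝ) 1 :=
      ⟨by nlinarith [ha.1, hc.1], by nlinarith [ha.2, hc.2]⟩
    have := (h _ hp).mpr (by nlinarith)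
    nlinarith
  · have hp : (a + c)/2 ∈ Ioo (0:ℝ) 1 :=
      ⟨by nlinarith [ha.1, hc.1], by nlinarith [ha.2, hc.2]⟩
    have := (h _ hp).mp (by nlinarith)
    nlinarith

lemma cdfRV_mem_Icc (X : Ω → ℝ) (t : ℝ) : cdfRV X t ∈ Icc (0:ℝ) 1 := by
  constructor
  · exact ENNReal.toReal_nonneg
  · rw [cdfRV]
    have h1 : (volume : Measure Ω) {ω | X ω ≤ t} ≤ 1 := prob_le_one
    have := ENNReal.toReal_mono ENNReal.one_ne_top h1
    simpa using this


end CdfQuantile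

def kkA (b : ℝ) : ℝ := Real.sqrt ((2/3) * (1-b)^3)
def slA (σ b : ℝ) : ℝ := σ / kkA b
def TqA (μ σ b u : ℝ) : ℝ := μ + slA σ b * (min (u - (1-b)) 0 + max (u - b) 0)
def FbA (μ σ b t : ℝ) : ℝ :=
  if t < μ then max 0 ((1-b) + (t-μ) / slA σ b) else min 1 (b + (t-μ) / slA σ b)

lemma kkA_pos {b : ℝ} (hb : b < 1) : 0 < kkA b := by
  apply Real.sqrt_pos.mpr
  have h : 0 < 1 - b := by linarith
  positivity

lemma kkA_sq {b : ℝ} (hb : b ≤ 1) : kkA b ^ 2 = (2/3) * (1-b)^3 := by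
  rw [kkA, Real.sq_sqrt]
  have h : (0:ℝ) ≤ 1 - b := by linarith
  positivity

lemma slA_pos {σ b : ℝ} (hσ : 0 < σ) (hb : b < 1) : 0 < slA σ b :=
  div_pos hσ (kkA_pos hb)

lemma TqA_eq {μ σ b : ℝ} (hb : 1/2 ≤ b) (u : ℝ) :
    TqA μ σ b u =
      (if u < 1 - b then μ + σ * (u - 1 + b) / Real.sqrt ((2/3) * (1 - b)^3)
       else if u ≤ b then μ
       else μ + σ * (u - b) / Real.sqrt ((2/3) * (1 - b)^3)) := by
  rw [TqA, slA, kkA]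
  split_ifs with h1 h2
  · rw [min_eq_left (by linarith), max_eq_right (by linarith)]
    ring
  · rw [min_eq_right (by linarith), max_eq_right (by linarith)]
    ring
  · rw [min_eq_right (by linarith), max_eq_left (by linarith)]
    ring

lemma FbA_mem_Icc {μ σ b : ℝ} (hσ : 0 < σ) (hb : 1/2 ≤ b) (hb1 : b < 1) (t : ℝ) :
    FbA μ σ b t ∈ Icc (0:ℝ) 1 := by
  have hs : 0 < slA σ b := slA_pos hσ hb1
  rw [FbA]
  split_ifs with ht
  · have : (t - μ) / slA σ b < 0 := div_neg_of_neg_of_pos (by linarith) hs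
    constructor
    · exact le_max_left _ _
    · apply max_le <;> linarith
  · have : 0 ≤ (t - μ) / slA σ b := div_nonneg (by linarith) hs.le
    constructor
    · apply le_min <;> linarith
    · exact min_le_left _ _

lemma TqA_le_iff {μ σ b : ℝ} (hσ : 0 < σ) (hb : 1/2 ≤ b) (hb1 : b < 1) {p t : ℝ}
    (hp : p ∈ Ioo (0:ℝ) 1) : TqA μ σ b p ≤ t ↔ p ≤ FbA μ σ b t := by
  obtain ⟨hp0, hp1⟩ := hp
  have hs : 0 < slA σ b := slA_pos hσ hb1
  have key : ∀ x : ℝ, (μ + slA σ b * x ≤ t ↔ x ≤ (t - μ) / slA σ b) := by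
    intro x
    rw [le_div_iff₀ hs]
    constructor <;> intro h <;> nlinarith
  rw [TqA, key, FbA]
  set s := slA σ b
  set r := (t - μ) / s with hrdef
  split_ifs with ht
  · have hr : r < 0 := div_neg_of_neg_of_pos (by linarith) hs
    rw [le_max_iff]
    constructor
    · intro h
      right
      rcases le_or_gt p (1-b) with h1 | h1
      · rw [min_eq_left (by linarith), max_eq_right (by linarith)] at h
        linarith
      · rcases le_or_gt p b with h2 | h2
        · rw [min_eq_right (by linarith), max_eq_right (by linarith)] at h
          linarith
        · rw [min_eq_right (by linarith), max_eq_left (by linarith)] at h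
          linarith
    · rintro (h | h)
      · linarith
      · have h1 : p < 1 - b := by linarith
        rw [min_eq_left (by linarith), max_eq_right (by linarith)]
        linarith
  · have hr : 0 ≤ r := div_nonneg (by linarith) hs.le
    rw [le_min_iff]
    constructor
    · intro h
      refine ⟨hp1.le, ?_⟩
      rcases le_or_gt p (1-b) with h1 | h1
      · linarith
      · rcases le_or_gt p b with h2 | h2
        · rw [min_eq_right (by linarith), max_eq_right (by linarith)] at h
          linarith
        · rw [min_eq_right (by linarith), max_eq_left (by linarith)] at h
          linarith
    · rintro ⟨-, h⟩
      rcases le_or_gt p (1-b) with h1 | h1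
      · rw [min_eq_left (by linarith), max_eq_right (by linarith)]
        have : 0 ≤ r := by linarith
        linarith
      · rcases le_or_gt p b with h2 | h2
        · rw [min_eq_right (by linarith), max_eq_right (by linarith)]
          linarith
        · rw [min_eq_right (by linarith), max_eq_left (by linarith)]
          linarith

lemma TqA_continuous (μ σ b : ℝ) : Continuous (TqA μ σ b) := by
  unfold TqA
  fun_prop

lemma TqA_measurable (μ σ b : ℝ) : Measurable (TqA μ σ b) :=
  (TqA_continuous μ σ b).measurable

section Law

variable {Ω : Type*} [MeasureSpace Ω] [IsProbabilityMeasure (volume : Measure Ω)]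

lemma cdfRV_eq_FbA {μ σ b : ℝ} (X : Ω → ℝ) (hX : Measurable X) (hσ : 0 < σ)
    (hb : 1/2 ≤ b) (hb1 : b < 1)
    (hq : ∀ u ∈ Ioo (0:ℝ) 1, quantileRV X u = TqA μ σ b u) (t : ℝ) :
    cdfRV X t = FbA μ σ b t := by
  apply sandwich_unit (cdfRV_mem_Icc X t) (FbA_mem_Icc hσ hb hb1 t)
  intro p hp
  rw [← quantileRV_le_iff X hX hp.1 hp.2, hq p hp, TqA_le_iff hσ hb hb1 hp]

lemma map_law {μ σ b : ℝ} (X : Ω → ℝ) (hX : Measurable X) (hσ : 0 < σ)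
    (hb : 1/2 ≤ b) (hb1 : b < 1)
    (hq : ∀ u ∈ Ioo (0:ℝ) 1, quantileRV X u = TqA μ σ b u) :
    Measure.map X volume = Measure.map (TqA μ σ b) (volume.restrict (Ioo 0 1)) := by
  haveI : IsProbabilityMeasure (Measure.map X volume) :=
    Measure.isProbabilityMeasure_map hX.aemeasurable
  refine Measure.ext_of_Iic _ _ (fun t => ?_)
  rw [Measure.map_apply hX measurableSet_Iic,
    Measure.map_apply (TqA_measurable μ σ b) measurableSet_Iic,
    Measure.restrict_apply (TqA_measurable μ σ b measurableSet_Iic)]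
  have hL : (volume : Measure Ω) (X ⁻¹' Iic t) = ENNReal.ofReal (cdfRV X t) := by
    rw [cdfRV, ENNReal.ofReal_toReal (measure_ne_top _ _)]
    rfl
  have hc01 := FbA_mem_Icc hσ hb hb1 (μ := μ) t
  set c : ℝ := FbA μ σ b t with hcdef
  have hset : TqA μ σ b ⁻¹' Iic t ∩ Ioo 0 1 = Ioo 0 1 ∩ Iic c := by
    ext u
    simp only [mem_inter_iff, mem_preimage, mem_Iic, mem_Ioo]
    constructor
    · rintro ⟨h1, h2⟩
      exact ⟨h2, (TqA_le_iff hσ hb hb1 h2).mp h1⟩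
    · rintro ⟨h2, h1⟩
      exact ⟨(TqA_le_iff hσ hb hb1 h2).mpr h1, h2⟩
  rw [hL, cdfRV_eq_FbA X hX hσ hb hb1 hq t, ← hcdef, hset]
  rcases eq_or_lt_of_le hc01.2 with hc1 | hc1
  · rw [hc1]
    have : Ioo (0:ℝ) 1 ∩ Iic 1 = Ioo 0 1 :=
      inter_eq_left.mpr (fun u hu => le_of_lt hu.2)
    rw [this, Real.volume_Ioo]
    norm_num
  · have : Ioo (0:ℝ) 1 ∩ Iic c = Ioc 0 c := by
      ext u
      simp only [mem_inter_iff, mem_Ioo, mem_Iic, mem_Ioc]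
      constructor
      · rintro ⟨⟨h1, h2⟩, h3⟩; exact ⟨h1, h3⟩
      · rintro ⟨h1, h3⟩; exact ⟨⟨h1, lt_of_le_of_lt h3 hc1⟩, h3⟩
    rw [this, Real.volume_Ioc]
    norm_num

lemma integrable_comp_law {μ σ b : ℝ} (X : Ω → ℝ) (hX : Measurable X) (hσ : 0 < σ)
    (hb : 1/2 ≤ b) (hb1 : b < 1)
    (hq : ∀ u ∈ Ioo (0:ℝ) 1, quantileRV X u = TqA μ σ b u)
    {φ : ℝ → ℝ} (hφ : Continuous φ) :
    Integrable (fun ω => φ (X ω)) (volume : Measure Ω) ∧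
      ∫ ω, φ (X ω) ∂(volume : Measure Ω) = ∫ u in Ioo (0:ℝ) 1, φ (TqA μ σ b u) := by
  have hmap := map_law X hX hσ hb hb1 hq
  have hint : Integrable φ (Measure.map X volume) := by
    rw [hmap]
    rw [integrable_map_measure hφ.aestronglyMeasurable (TqA_measurable μ σ b).aemeasurable]
    exact ((hφ.comp (TqA_continuous μ σ b)).integrableOn_Icc).mono_set Ioo_subset_Icc_self
  constructor
  · exact (integrable_map_measure hφ.aestronglyMeasurable hX.aemeasurable).mp hint
  · calc ∫ ω, φ (X ω) ∂(volume : Measure Ω)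
        = ∫ x, φ x ∂(Measure.map X volume) :=
          (integral_map hX.aemeasurable hφ.aestronglyMeasurable).symm
      _ = ∫ x, φ x ∂(Measure.map (TqA μ σ b) (volume.restrict (Ioo 0 1))) := by rw [hmap]
      _ = ∫ u in Ioo (0:ℝ) 1, φ (TqA μ σ b u) :=
          integral_map (TqA_measurable μ σ b).aemeasurable hφ.aestronglyMeasurable

lemma TqA_reflect {μ σ b : ℝ} (hb : 1/2 ≤ b) (v : ℝ) :
    μ - TqA μ σ b (1 - v) = TqA μ σ b v - μ := by
  unfold TqA
  rcases le_or_gt v (1-b) with h1 | h1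
  · rw [min_eq_right (by linarith), max_eq_left (by linarith),
      min_eq_left (by linarith), max_eq_right (by linarith)]
    ring
  · rcases le_or_gt v b with h2 | h2
    · rw [min_eq_right (by linarith), max_eq_right (by linarith),
        min_eq_right (by linarith), max_eq_right (by linarith)]
      ring
    · rw [min_eq_left (by linarith), max_eq_right (by linarith),
        min_eq_right (by linarith), max_eq_left (by linarith)]
      ring

lemma map_reflect :
    Measure.map (fun u : ℝ => 1 - u) (volume.restrict (Ioo 0 1)) =
      volume.restrict (Ioo 0 1) := by
  have h : MeasurePreserving (fun u : ℝ => 1 - u) volume volume :=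
    Measure.measurePreserving_sub_left volume 1
  have hpre : (fun u : ℝ => 1 - u) ⁻¹' (Ioo 0 1) = Ioo 0 1 := by
    ext u
    simp only [mem_preimage, mem_Ioo]
    constructor <;> rintro ⟨h1, h2⟩ <;> constructor <;> linarith
  have := (h.restrict_preimage (measurableSet_Ioo (a := (0:ℝ)) (b := 1))).map_eq
  rw [hpre] at this
  exact this

end Law

section Integrals

lemma integral_affine (c d r : ℝ) (a e : ℝ) :
    ∫ u in a..e, (c + d * (u - r)) = c * (e - a) + d * ((e-r)^2 - (a-r)^2) / 2 := by
  have h : ∀ u : ℝ, HasDerivAt (fun u => c * u + d/2 * (u-r)^2) (c + d * (u - r)) u := by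
    intro u
    have h1 : HasDerivAt (fun u : ℝ => c * u) c u := by
      simpa using (hasDerivAt_id u).const_mul c
    have h2 : HasDerivAt (fun u : ℝ => (u - r)^2) (2*(u-r)) u := by
      have h2' := ((hasDerivAt_id u).sub_const r).pow 2; simp at h2'; exact h2'
    have h3 := h1.add (h2.const_mul (d/2))
    exact h3.congr_deriv (by ring)
  rw [intervalIntegral.integral_eq_sub_of_hasDerivAt (fun u _ => h u)
    (by apply Continuous.intervalIntegrable; continuity)]
  ring

lemma integral_affine_sq (d r : ℝ) (a e : ℝ) :
    ∫ u in a..e, (d * (u - r))^2 = d^2 * ((e-r)^3 - (a-r)^3) / 3 := by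
  have h : ∀ u : ℝ, HasDerivAt (fun u => d^2/3 * (u-r)^3) ((d * (u - r))^2) u := by
    intro u
    have h2 : HasDerivAt (fun u : ℝ => (u - r)^3) (3*(u-r)^2) u := by
      have h2' := ((hasDerivAt_id u).sub_const r).pow 3; simp at h2'; exact h2'
    have h3 := h2.const_mul (d^2/3)
    exact h3.congr_deriv (by ring)
  rw [intervalIntegral.integral_eq_sub_of_hasDerivAt (fun u _ => h u)
    (by apply Continuous.intervalIntegrable; continuity)]
  ring

lemma TqA_intervalIntegrable (μ σ b : ℝ) (φ : ℝ → ℝ) (hφ : Continuous φ) (a e : ℝ) :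
    IntervalIntegrable (fun u => φ (TqA μ σ b u)) MeasureTheory.volume a e :=
  (hφ.comp (TqA_continuous μ σ b)).intervalIntegrable a e

lemma TqA_split (μ σ b : ℝ) (hb : 1/2 ≤ b) (hb1 : b ≤ 1) (φ : ℝ → ℝ) (hφ : Continuous φ)
    (a : ℝ) (ha : a ≤ 1 - b) :
    ∫ u in a..1, φ (TqA μ σ b u) =
      (∫ u in a..(1-b), φ (μ + slA σ b * (u - (1-b)))) +
      ((∫ u in (1-b)..b, φ μ) + ∫ u in b..1, φ (μ + slA σ b * (u - b))) := by
  have hbb : 1 - b ≤ b := by linarith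
  have h1 := intervalIntegral.integral_add_adjacent_intervals
    (TqA_intervalIntegrable μ σ b φ hφ a (1-b)) (TqA_intervalIntegrable μ σ b φ hφ (1-b) 1)
  have h2 := intervalIntegral.integral_add_adjacent_intervals
    (TqA_intervalIntegrable μ σ b φ hφ (1-b) b) (TqA_intervalIntegrable μ σ b φ hφ b 1)
  rw [← h1, ← h2]
  congr 1
  · apply intervalIntegral.integral_congr
    intro u hu
    rw [Set.uIcc_of_le ha] at hu
    simp only [TqA]
    rw [min_eq_left (by linarith [hu.2]), max_eq_right (by linarith [hu.2])]
    norm_num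
  congr 1
  · apply intervalIntegral.integral_congr
    intro u hu
    rw [Set.uIcc_of_le hbb] at hu
    simp only [TqA]
    rw [min_eq_right (by linarith [hu.1]), max_eq_right (by linarith [hu.2])]
    simp
  · apply intervalIntegral.integral_congr
    intro u hu
    rw [Set.uIcc_of_le (by linarith : b ≤ 1)] at hu
    simp only [TqA]
    rw [min_eq_right (by linarith [hu.1]), max_eq_left (by linarith [hu.1])]
    simp

lemma integral_TqA {μ σ b : ℝ} (hσ : 0 < σ) (hb : 1/2 ≤ b) (hb1 : b < 1) :
    ∫ u in Set.Ioo (0:ℝ) 1, TqA μ σ b u = μ := by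
  rw [← MeasureTheory.integral_Ioc_eq_integral_Ioo,
    ← intervalIntegral.integral_of_le (by norm_num : (0:ℝ) ≤ 1)]
  have := TqA_split μ σ b hb hb1.le id continuous_id 0 (by linarith)
  simp only [id] at this
  rw [this, integral_affine μ (slA σ b) (1-b) 0 (1-b),
    intervalIntegral.integral_const, integral_affine μ (slA σ b) b b 1]
  simp only [smul_eq_mul]
  ring

lemma integral_TqA_sq {μ σ b : ℝ} (hσ : 0 < σ) (hb : 1/2 ≤ b) (hb1 : b < 1) :
    ∫ u in Set.Ioo (0:ℝ) 1, (TqA μ σ b u - μ)^2 = σ^2 := by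
  rw [← MeasureTheory.integral_Ioc_eq_integral_Ioo,
    ← intervalIntegral.integral_of_le (by norm_num : (0:ℝ) ≤ 1)]
  have := TqA_split μ σ b hb hb1.le (fun x => (x - μ)^2)
    (by continuity) 0 (by linarith)
  simp only [add_sub_cancel_left] at this
  rw [this]
  rw [show (μ - μ) = (0:ℝ) by ring]
  rw [integral_affine_sq (slA σ b) (1-b) 0 (1-b), integral_affine_sq (slA σ b) b b 1]
  simp only [ne_eq, OfNat.ofNat_ne_zero, not_false_eq_true, zero_pow,
    intervalIntegral.integral_const, smul_eq_mul, mul_zero]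
  have hne : (2/3:ℝ)*(1-b)^3 ≠ 0 := by
    have h0 : (0:ℝ) < 1 - b := by linarith
    positivity
  have hrel : slA σ b ^ 2 * ((2/3)*(1-b)^3) = σ^2 := by
    rw [slA, div_pow, kkA_sq hb1.le]
    have h0 : (0:ℝ) < 1 - b := by linarith
    field_simp
  linear_combination hrel

end Integrals



section Convexity

lemma affine_convexOn (c d r : ℝ) {s : Set ℝ} (hs : Convex ℝ s) :
    ConvexOn ℝ s (fun t => c + d * (t - r)) := by
  refine ⟨hs, fun x hx y hy a b ha hb hab => le_of_eq ?_⟩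
  simp only [smul_eq_mul]
  linear_combination (d * r - c) * hab

lemma affine_concaveOn (c d r : ℝ) {s : Set ℝ} (hs : Convex ℝ s) :
    ConcaveOn ℝ s (fun t => c + d * (t - r)) := by
  refine ⟨hs, fun x hx y hy a b ha hb hab => ge_of_eq ?_⟩
  simp only [smul_eq_mul]
  linear_combination (d * r - c) * hab

lemma convexOn_congr {s : Set ℝ} {f g : ℝ → ℝ} (h : ConvexOn ℝ s g)
    (he : ∀ x ∈ s, f x = g x) : ConvexOn ℝ s f := by
  refine ⟨h.1, fun x hx y hy a b ha hb hab => ?_⟩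
  rw [he _ hx, he _ hy, he _ (h.1 hx hy ha hb hab)]
  exact h.2 hx hy ha hb hab

lemma concaveOn_congr {s : Set ℝ} {f g : ℝ → ℝ} (h : ConcaveOn ℝ s g)
    (he : ∀ x ∈ s, f x = g x) : ConcaveOn ℝ s f := by
  refine ⟨h.1, fun x hx y hy a b ha hb hab => ?_⟩
  rw [he _ hx, he _ hy, he _ (h.1 hx hy ha hb hab)]
  exact h.2 hx hy ha hb hab

end Convexity

section MemVSU

variable {Ω : Type*} [MeasureSpace Ω] [IsProbabilityMeasure (volume : Measure Ω)]

lemma mem_VSU_of_quantile {μ σ b : ℝ} (X : Ω → ℝ) (hX : Measurable X) (hσ : 0 < σ)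
    (hb : 1/2 ≤ b) (hb1 : b < 1)
    (hq : ∀ u ∈ Ioo (0:ℝ) 1, quantileRV X u = TqA μ σ b u) :
    X ∈ (VSU μ σ : Set (Ω → ℝ)) := by
  have hmean := integrable_comp_law X hX hσ hb hb1 hq (φ := id) continuous_id
  have hvar := integrable_comp_law X hX hσ hb hb1 hq (φ := fun x => (x - μ)^2)
    (by continuity)
  have hFb := cdfRV_eq_FbA X hX hσ hb hb1 hq
  have hs : 0 < slA σ b := slA_pos hσ hb1
  refine ⟨⟨hX, ?_, ?_, ?_, ?_⟩, ?_, ?_⟩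
  · exact hmean.1
  · rw [show (∫ ω, X ω ∂(volume : Measure Ω)) = ∫ ω, id (X ω) ∂(volume : Measure Ω) from rfl,
      hmean.2]
    exact integral_TqA hσ hb hb1
  · exact hvar.1
  · rw [show (∫ ω, (X ω - μ)^2 ∂(volume : Measure Ω))
        = ∫ ω, (fun x => (x - μ)^2) (X ω) ∂(volume : Measure Ω) from rfl, hvar.2]
    exact integral_TqA_sq hσ hb hb1
  · -- symmetry
    rw [SymmAbout]
    have hmap := map_law X hX hσ hb hb1 hq
    have hg1 : Measurable (fun x : ℝ => x - μ) := by fun_prop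
    have hg2 : Measurable (fun x : ℝ => μ - x) := by fun_prop
    have hg3 : Measurable (fun u : ℝ => μ - TqA μ σ b u) :=
      (continuous_const.sub (TqA_continuous μ σ b)).measurable
    have hg4 : Measurable (fun u : ℝ => 1 - u) := by fun_prop
    have e1 : Measure.map (fun ω => X ω - μ) (volume : Measure Ω)
        = Measure.map (fun u => TqA μ σ b u - μ) (volume.restrict (Ioo 0 1)) := by
      show Measure.map ((fun x : ℝ => x - μ) ∘ X) (volume : Measure Ω) = _
      rw [← Measure.map_map hg1 hX, hmap,
        Measure.map_map hg1 (TqA_measurable μ σ b)]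
      rfl
    have e2 : Measure.map (fun ω => μ - X ω) (volume : Measure Ω)
        = Measure.map (fun u => μ - TqA μ σ b u) (volume.restrict (Ioo 0 1)) := by
      show Measure.map ((fun x : ℝ => μ - x) ∘ X) (volume : Measure Ω) = _
      rw [← Measure.map_map hg2 hX, hmap,
        Measure.map_map hg2 (TqA_measurable μ σ b)]
      rfl
    have e3 : Measure.map (fun u => μ - TqA μ σ b u) (volume.restrict (Ioo 0 1))
        = Measure.map (fun u => TqA μ σ b u - μ) (volume.restrict (Ioo 0 1)) := by
      conv_lhs => rw [← map_reflect]
      rw [Measure.map_map hg3 hg4]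
      congr 1
      funext v
      exact TqA_reflect hb v
    rw [e1, e2, e3]
  · -- unimodal
    refine ⟨μ, ?_, ?_⟩
    · have hg : ConvexOn ℝ (Iio μ) (fun t => max 0 ((1-b) + (1 / slA σ b) * (t - μ))) :=
        (convexOn_const 0 (convex_Iio μ)).sup (affine_convexOn (1-b) (1 / slA σ b) μ (convex_Iio μ))
      refine convexOn_congr hg (fun t ht => ?_)
      rw [hFb t, FbA, if_pos (show t < μ from ht)]
      congr 1
      ring
    · have hg : ConcaveOn ℝ (Ioi μ) (fun t => min 1 (b + (1 / slA σ b) * (t - μ))) :=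
        (concaveOn_const 1 (convex_Ioi μ)).inf (affine_concaveOn b (1 / slA σ b) μ (convex_Ioi μ))
      refine concaveOn_congr hg (fun t ht => ?_)
      rw [hFb t, FbA, if_neg (not_lt.mpr (le_of_lt (show μ < t from ht)))]
      congr 1
      ring

end MemVSU



section TVaRcomp

lemma int_TqA_high {μ σ b α : ℝ} (hb : 1/2 ≤ b) (hbα : b ≤ α) (hα1 : α ≤ 1) :
    ∫ u in α..1, TqA μ σ b u = μ*(1-α) + slA σ b * ((1-b)^2 - (α-b)^2)/2 := by
  have he : Set.EqOn (TqA μ σ b) (fun u => μ + slA σ b * (u - b)) (Set.uIcc α 1) := by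
    intro u hu
    rw [Set.uIcc_of_le hα1] at hu
    simp only [TqA]
    rw [min_eq_right (by linarith [hu.1]), max_eq_left (by linarith [hu.1])]
    ring
  rw [intervalIntegral.integral_congr he, integral_affine]

lemma int_TqA_low {μ σ b α : ℝ} (hb : 1/2 ≤ b) (hb1 : b < 1) (hαb : α ≤ 1-b) :
    ∫ u in α..1, TqA μ σ b u = μ*(1-α) + slA σ b * ((1-b)^2 - (α-(1-b))^2)/2 := by
  have h := TqA_split μ σ b hb hb1.le id continuous_id α hαb
  simp only [id_eq] at h
  rw [h, integral_affine, intervalIntegral.integral_const, integral_affine]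
  simp only [smul_eq_mul]
  ring

end TVaRcomp

section TVaRform

variable {Ω : Type*} [MeasureSpace Ω] [IsProbabilityMeasure (volume : Measure Ω)]

lemma TVaR_eq_int {μ σ b α : ℝ} (X : Ω → ℝ) (hα : α ∈ Ioo (0:ℝ) 1)
    (hq : ∀ u ∈ Ioo (0:ℝ) 1, quantileRV X u = TqA μ σ b u) :
    TVaR α X = (1-α)⁻¹ * ∫ u in α..1, TqA μ σ b u := by
  rw [TVaR]
  congr 1
  rw [intervalIntegral.integral_of_le hα.2.le, intervalIntegral.integral_of_le hα.2.le]
  apply setIntegral_congr_ae measurableSet_Ioc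
  have h1 : ∀ᵐ u : ℝ, u ≠ (1:ℝ) := by
    rw [ae_iff]
    simpa using (Real.volume_singleton (x := (1:ℝ)))
  filter_upwards [h1] with u hu1 hu2
  exact hq u ⟨lt_trans hα.1 hu2.1, lt_of_le_of_ne hu2.2 hu1⟩

lemma TVaR_high {μ σ b α : ℝ} (X : Ω → ℝ) (hb : 1/2 ≤ b) (hα : α ∈ Ioo (0:ℝ) 1)
    (hbα : b ≤ α)
    (hq : ∀ u ∈ Ioo (0:ℝ) 1, quantileRV X u = TqA μ σ b u) :
    TVaR α X = μ + slA σ b * ((1-b)^2 - (α-b)^2)/(2*(1-α)) := by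
  rw [TVaR_eq_int X hα hq, int_TqA_high hb hbα hα.2.le]
  have h1 : (1:ℝ) - α ≠ 0 := by have := hα.2; intro h; linarith
  field_simp

lemma TVaR_low {μ σ b α : ℝ} (X : Ω → ℝ) (hb : 1/2 ≤ b) (hb1 : b < 1)
    (hα : α ∈ Ioo (0:ℝ) 1) (hαb : α ≤ 1-b)
    (hq : ∀ u ∈ Ioo (0:ℝ) 1, quantileRV X u = TqA μ σ b u) :
    TVaR α X = μ + slA σ b * ((1-b)^2 - (α-(1-b))^2)/(2*(1-α)) := by
  rw [TVaR_eq_int X hα hq, int_TqA_low hb hb1 hαb]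
  have h1 : (1:ℝ) - α ≠ 0 := by have := hα.2; intro h; linarith
  field_simp

end TVaRform

section Ineq

lemma le_of_sq_le_sq' {a c : ℝ} (hc : 0 ≤ c) (h : a^2 ≤ c^2) : a ≤ c := by
  by_contra h'
  push_neg at h'
  nlinarith [mul_pos (sub_pos.2 h') (show (0:ℝ) < a + c by linarith)]

lemma cubic_fact {x t : ℝ} (hx : 0 ≤ x) (hxt : x ≤ 2*t) :
    9*x*(2*t-x)^2 ≤ 32/3*t^3 := by
  have ht : 0 ≤ t := by linarith
  nlinarith [mul_nonneg (sq_nonneg (x - 2/3*t)) (show (0:ℝ) ≤ 8/3*t - x by linarith)]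

lemma quad_fact {β t : ℝ} (hβ1 : 1/3 ≤ β) (hβ2 : β ≤ 1/2) (h1 : β ≤ t) (h2 : t ≤ 1/2) :
    (2*t-β)^2 ≤ 8*(1-β)^2*t^3 := by
  have hq1 : 0 ≤ 6*β - 4*β^2 - 1 := by
    nlinarith [mul_nonneg (sub_nonneg.2 hβ1) (sub_nonneg.2 hβ2)]
  have hQ : 4*(1-β)^2*t^2 - 2*β*(2-β)*t + β^2 ≤ 0 := by
    rcases eq_or_lt_of_le hβ2 with hβeq | hβlt
    · have ht : t = 1/2 := le_antisymm h2 (hβeq ▸ h1)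
      rw [ht, hβeq]
      norm_num
    · nlinarith [mul_nonneg (mul_nonneg (show (0:ℝ) ≤ 1/2 - t by linarith) (sq_nonneg β)) hq1,
        mul_nonneg (mul_nonneg (sub_nonneg.2 h1) (show (0:ℝ) ≤ 3*β-1 by linarith))
          (show (0:ℝ) ≤ 1 - β by linarith),
        mul_nonneg (mul_nonneg (mul_nonneg (sub_nonneg.2 h1)
          (show (0:ℝ) ≤ 1/2 - t by linarith)) (sq_nonneg (1-β)))
          (show (0:ℝ) ≤ 1/2 - β by linarith),
        hβlt]
  nlinarith [mul_nonneg (show (0:ℝ) ≤ 1 - 2*t by linarith)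
    (show (0:ℝ) ≤ -(4*(1-β)^2*t^2 - 2*β*(2-β)*t + β^2) by linarith)]

-- core bound: 3 * c * (2*t - c^2... )
lemma key_bound {σ t x K : ℝ} (hσ : 0 < σ) (hK : 0 < K) (hK2 : K^2 = 2/3*t^3)
    (hx : 0 ≤ x) (hxt : x ≤ t) :
    3 * σ * x * (2*t - x) ≤ 4 * σ * Real.sqrt x * K := by
  have hs : 0 ≤ Real.sqrt x := Real.sqrt_nonneg x
  have hs2 : (Real.sqrt x)^2 = x := Real.sq_sqrt hx
  apply le_of_sq_le_sq' (by positivity)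
  have h9 := cubic_fact hx (by linarith : x ≤ 2*t)
  have hexp : (4 * σ * Real.sqrt x * K)^2 = 16*σ^2*x*(2/3*t^3) := by
    rw [show (4 * σ * Real.sqrt x * K)^2 = 16*σ^2*((Real.sqrt x)^2)*(K^2) by ring, hs2, hK2]
  rw [hexp]
  nlinarith [mul_le_mul_of_nonneg_left h9 (show (0:ℝ) ≤ σ^2*x by positivity)]

end Ineq

section CaseLemmas

lemma bound_low {σ α b : ℝ} (hσ : 0 < σ) (hα0 : 0 < α) (hα1 : α < 1)
    (hb : 1/2 ≤ b) (hb1 : b < 1) (hαb : α ≤ 1 - b) :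
    slA σ b * ((1-b)^2 - (α-(1-b))^2) / (2*(1-α)) ≤ 2*σ*Real.sqrt α/(3*(1-α)) := by
  have hK : 0 < kkA b := kkA_pos hb1
  have hK2 : kkA b ^ 2 = 2/3*(1-b)^3 := kkA_sq hb1.le
  have key := key_bound (t := 1-b) hσ hK hK2 hα0.le hαb
  have expand : slA σ b * ((1-b)^2 - (α-(1-b))^2)
      = (σ * (α*(2*(1-b)-α)))/(kkA b) := by rw [slA]; ring
  rw [expand, div_div, div_le_div_iff₀ (mul_pos hK (by linarith : (0:ℝ) < 2*(1-α)))
    (by linarith : (0:ℝ) < 3*(1-α))]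
  nlinarith [mul_le_mul_of_nonneg_right key (show (0:ℝ) ≤ 1-α by linarith)]

lemma bound_high {σ α b : ℝ} (hσ : 0 < σ) (hα0 : 0 < α) (hα1 : α < 1)
    (hb : 1/2 ≤ b) (hb1 : b < 1) (hbα : b ≤ α) :
    slA σ b * ((1-b)^2 - (α-b)^2) / (2*(1-α)) ≤ 2*σ/(3*Real.sqrt (1-α)) := by
  have hK : 0 < kkA b := kkA_pos hb1
  have hK2 : kkA b ^ 2 = 2/3*(1-b)^3 := kkA_sq hb1.le
  have hqpos : 0 < Real.sqrt (1-α) := Real.sqrt_pos.mpr (by linarith)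
  have hq2 : Real.sqrt (1-α) ^ 2 = 1-α := Real.sq_sqrt (by linarith)
  have key := key_bound (t := 1-b) (x := 1-α) hσ hK hK2 (by linarith) (by linarith)
  have h := mul_le_mul_of_nonneg_right key (Real.sqrt_nonneg (1-α))
  rw [show 4*σ*Real.sqrt (1-α)*kkA b*Real.sqrt (1-α)
      = 4*σ*(Real.sqrt (1-α)^2)*kkA b by ring, hq2] at h
  have expand : slA σ b * ((1-b)^2 - (α-b)^2)
      = (σ * ((1-α)*(2*(1-b)-(1-α))))/(kkA b) := by rw [slA]; ring
  rw [expand, div_div, div_le_div_iff₀ (mul_pos hK (by linarith : (0:ℝ) < 2*(1-α)))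
    (by linarith [hqpos] : (0:ℝ) < 3*Real.sqrt (1-α))]
  nlinarith [h]

lemma bound_mid_low {σ α b : ℝ} (hσ : 0 < σ) (hα3 : 1/3 ≤ α) (hαh : α ≤ 1/2)
    (hb : 1/2 ≤ b) (hb1 : b < 1) (hαb : α ≤ 1 - b) :
    slA σ b * ((1-b)^2 - (α-(1-b))^2) / (2*(1-α)) ≤ Real.sqrt 3 * σ * α := by
  have hK : 0 < kkA b := kkA_pos hb1
  have hK2 : kkA b ^ 2 = 2/3*(1-b)^3 := kkA_sq hb1.le
  have h3 : Real.sqrt 3 ^ 2 = 3 := Real.sq_sqrt (by norm_num)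
  have h3p : 0 < Real.sqrt 3 := Real.sqrt_pos.mpr (by norm_num)
  have hquad := quad_fact hα3 hαh hαb (by linarith : (1:ℝ)-b ≤ 1/2)
  have h : 2*(1-b) - α ≤ 2*Real.sqrt 3*(1-α)*kkA b := by
    apply le_of_sq_le_sq' (mul_nonneg (mul_nonneg (mul_nonneg
      (by norm_num : (0:ℝ) ≤ 2) h3p.le) (by linarith : (0:ℝ) ≤ 1-α)) hK.le)
    rw [show (2*Real.sqrt 3*(1-α)*kkA b)^2 = 4*(Real.sqrt 3^2)*(1-α)^2*(kkA b^2) by ring,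
      h3, hK2]
    nlinarith [hquad]
  have expand : slA σ b * ((1-b)^2 - (α-(1-b))^2)
      = (σ * (α*(2*(1-b)-α)))/(kkA b) := by rw [slA]; ring
  rw [expand, div_div, div_le_iff₀ (mul_pos hK (by linarith : (0:ℝ) < 2*(1-α)))]
  nlinarith [mul_le_mul_of_nonneg_left h (show (0:ℝ) ≤ σ*α by positivity),
    mul_pos hK (show (0:ℝ) < 1-α by linarith)]

lemma bound_mid_high {σ α b : ℝ} (hσ : 0 < σ) (hαh : 1/2 ≤ α) (hα23 : α ≤ 2/3)
    (hα1 : α < 1) (hb : 1/2 ≤ b) (hb1 : b < 1) (hbα : b ≤ α) :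
    slA σ b * ((1-b)^2 - (α-b)^2) / (2*(1-α)) ≤ Real.sqrt 3 * σ * α := by
  have hK : 0 < kkA b := kkA_pos hb1
  have hK2 : kkA b ^ 2 = 2/3*(1-b)^3 := kkA_sq hb1.le
  have h3 : Real.sqrt 3 ^ 2 = 3 := Real.sq_sqrt (by norm_num)
  have h3p : 0 < Real.sqrt 3 := Real.sqrt_pos.mpr (by norm_num)
  have hquad := quad_fact (β := 1-α) (t := 1-b) (by linarith) (by linarith)
    (by linarith) (by linarith)
  have h : 2*(1-b) - (1-α) ≤ 2*Real.sqrt 3*α*kkA b := by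
    apply le_of_sq_le_sq' (mul_nonneg (mul_nonneg (mul_nonneg
      (by norm_num : (0:ℝ) ≤ 2) h3p.le) (by linarith : (0:ℝ) ≤ α)) hK.le)
    rw [show (2*Real.sqrt 3*α*kkA b)^2 = 4*(Real.sqrt 3^2)*α^2*(kkA b^2) by ring, h3, hK2]
    nlinarith [hquad]
  have expand : slA σ b * ((1-b)^2 - (α-b)^2)
      = (σ * ((1-α)*(2*(1-b)-(1-α))))/(kkA b) := by rw [slA]; ring
  rw [expand, div_div, div_le_iff₀ (mul_pos hK (by linarith : (0:ℝ) < 2*(1-α)))]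
  nlinarith [mul_le_mul_of_nonneg_left h (show (0:ℝ) ≤ σ*(1-α) by nlinarith),
    mul_pos hK (show (0:ℝ) < 1-α by linarith)]

lemma value_low {μ σ α : ℝ} (hσ : 0 < σ) (hα0 : 0 < α) (hα1 : α < 1) :
    μ + slA σ (1 - 3*α/2) *
      ((1-(1 - 3*α/2))^2 - (α-(1-(1 - 3*α/2)))^2) / (2*(1-α))
      = μ + 2*σ*Real.sqrt α/(3*(1-α)) := by
  have ha2 : Real.sqrt α ^ 2 = α := Real.sq_sqrt hα0.le
  have hap : 0 < Real.sqrt α := Real.sqrt_pos.mpr hα0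
  have hk : kkA (1 - 3*α/2) = 3/2*α*Real.sqrt α := by
    rw [kkA, show (2/3:ℝ)*(1-(1 - 3*α/2))^3 = (3/2*α*Real.sqrt α)^2 from by
      rw [mul_pow, Real.sq_sqrt hα0.le]; ring]
    exact Real.sqrt_sq (by positivity)
  rw [slA, hk]
  have h1 : (1:ℝ) - α ≠ 0 := by intro h; linarith
  field_simp
  linear_combination (-8*α*σ) * ha2

lemma value_mid_low {μ σ α : ℝ} (hσ : 0 < σ) (hα1 : α < 1) :
    μ + slA σ (1/2) * ((1-(1/2:ℝ))^2 - (α-(1-(1/2:ℝ)))^2) / (2*(1-α))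
      = μ + Real.sqrt 3 * σ * α := by
  have h3 : Real.sqrt 3 ^ 2 = 3 := Real.sq_sqrt (by norm_num)
  have h3p : 0 < Real.sqrt 3 := Real.sqrt_pos.mpr (by norm_num)
  have hk : kkA (1/2) = 1/(2*Real.sqrt 3) := by
    rw [kkA, show (2/3:ℝ)*(1-1/2)^3 = (1/(2*Real.sqrt 3))^2 from by
      rw [div_pow, mul_pow, Real.sq_sqrt (by norm_num : (3:ℝ) ≥ 0)]; norm_num]
    exact Real.sqrt_sq (by positivity)
  rw [slA, hk]
  have h1 : (1:ℝ) - α ≠ 0 := by intro h; linarith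
  field_simp
  ring_nf

lemma value_mid_high {μ σ α : ℝ} (hσ : 0 < σ) (hα1 : α < 1) :
    μ + slA σ (1/2) * ((1-(1/2:ℝ))^2 - (α-(1/2:ℝ))^2) / (2*(1-α))
      = μ + Real.sqrt 3 * σ * α := by
  rw [show (α-(1/2:ℝ))^2 = (α-(1-(1/2:ℝ)))^2 by norm_num]
  exact value_mid_low hσ hα1

lemma value_high {μ σ α : ℝ} (hσ : 0 < σ) (hα23 : 2/3 ≤ α) (hα1 : α < 1) :
    μ + slA σ ((3*α-1)/2) *
      ((1-((3*α-1)/2))^2 - (α-((3*α-1)/2))^2) / (2*(1-α))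
      = μ + 2*σ/(3*Real.sqrt (1-α)) := by
  have hq2 : Real.sqrt (1-α) ^ 2 = 1-α := Real.sq_sqrt (by linarith)
  have hqp : 0 < Real.sqrt (1-α) := Real.sqrt_pos.mpr (by linarith)
  have hk : kkA ((3*α-1)/2) = 3/2*(1-α)*Real.sqrt (1-α) := by
    rw [kkA, show (2/3:ℝ)*(1-(3*α-1)/2)^3 = (3/2*(1-α)*Real.sqrt (1-α))^2 from by
      rw [mul_pow, Real.sq_sqrt (by linarith : (0:ℝ) ≤ 1-α)]; ring]
    exact Real.sqrt_sq (mul_nonneg (mul_nonneg (by norm_num : (0:ℝ) ≤ 3/2)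
      (by linarith : (0:ℝ) ≤ 1-α)) hqp.le)
  rw [slA, hk]
  have h1 : (1:ℝ) - α ≠ 0 := by intro h; linarith
  field_simp
  ring_nf

end CaseLemmas

end AuxProof

/-- Eq. (xx1): TVaR maximization over the explicit family `S(α) ∩ V(μ,σ)` of symmetric
unimodal random variables with piecewise-linear quantile functions. -/
theorem stmt_15 {Ω : Type*} [MeasureSpace Ω] [IsProbabilityMeasure (volume : Measure Ω)]
    (μ σ α : ℝ) (hσ : 0 < σ) (hα : α ∈ Ioo (0:ℝ) 1)
    (X : ℝ → Ω → ℝ)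
    (hXmeas : ∀ b ∈ Ico (1/2:ℝ) 1, Measurable (X b))
    (hXq : ∀ b ∈ Ico (1/2:ℝ) 1, ∀ u ∈ Ioo (0:ℝ) 1,
      quantileRV (X b) u =
        if u < 1 - b then μ + σ * (u - 1 + b) / Real.sqrt ((2/3) * (1 - b)^3)
        else if u ≤ b then μ
        else μ + σ * (u - b) / Real.sqrt ((2/3) * (1 - b)^3)) :
    (∀ b ∈ Ico (1/2:ℝ) 1, X b ∈ (VSU μ σ : Set (Ω → ℝ))) ∧
    (α < 1/3 →
      sSup ((fun b => TVaR α (X b)) '' Icc (1/2:ℝ) (max α (1 - α))) =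
        μ + 2 * σ * Real.sqrt α / (3 * (1 - α))) ∧
    (1/3 ≤ α → α < 2/3 →
      sSup ((fun b => TVaR α (X b)) '' Icc (1/2:ℝ) (max α (1 - α))) =
        μ + Real.sqrt 3 * σ * α) ∧
    (2/3 ≤ α →
      sSup ((fun b => TVaR α (X b)) '' Icc (1/2:ℝ) (max α (1 - α))) =
        μ + 2 * σ / (3 * Real.sqrt (1 - α))) := by
  
  obtain ⟨hα0, hα1⟩ := hα
  have hq : ∀ b ∈ Ico (1/2:ℝ) 1, ∀ u ∈ Ioo (0:ℝ) 1,
      quantileRV (X b) u = TqA μ σ b u :=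
    fun b hb u hu => (hXq b hb u hu).trans (TqA_eq hb.1 u).symm
  refine ⟨?_, ?_, ?_, ?_⟩
  · exact fun b hb => mem_VSU_of_quantile (X b) (hXmeas b hb) hσ hb.1 hb.2 (hq b hb)
  · -- α < 1/3
    intro h13
    rw [max_eq_right (by linarith : α ≤ 1 - α)]
    apply IsGreatest.csSup_eq
    constructor
    · refine ⟨1 - 3*α/2, ⟨by linarith, by linarith⟩, ?_⟩
      show TVaR α (X (1 - 3*α/2)) = _
      rw [TVaR_low (X (1 - 3*α/2)) (by linarith) (by linarith) ⟨hα0, hα1⟩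
        (by linarith : α ≤ 1 - (1 - 3*α/2)) (hq _ ⟨by linarith, by linarith⟩)]
      exact value_low hσ hα0 hα1
    · rintro y ⟨b, hbIcc, rfl⟩
      have hb2 : b ≤ 1 - α := hbIcc.2
      have hb1 : b < 1 := by linarith
      show TVaR α (X b) ≤ _
      rw [TVaR_low (X b) hbIcc.1 hb1 ⟨hα0, hα1⟩ (by linarith) (hq b ⟨hbIcc.1, hb1⟩)]
      have := bound_low hσ hα0 hα1 hbIcc.1 hb1 (by linarith)
      linarith
  · -- 1/3 ≤ α < 2/3
    intro h13 h23
    rcases le_or_gt α (1/2) with hh | hh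
    · rw [max_eq_right (by linarith : α ≤ 1 - α)]
      apply IsGreatest.csSup_eq
      constructor
      · refine ⟨1/2, ⟨le_refl _, by linarith⟩, ?_⟩
        show TVaR α (X (1/2)) = _
        rw [TVaR_low (X (1/2)) (le_refl _) (by norm_num) ⟨hα0, hα1⟩
          (by norm_num [hh] : α ≤ 1 - (1/2:ℝ)) (hq _ ⟨le_refl _, by norm_num⟩)]
        exact value_mid_low hσ hα1
      · rintro y ⟨b, hbIcc, rfl⟩
        have hb2 : b ≤ 1 - α := hbIcc.2
        have hb1 : b < 1 := by linarith
        show TVaR α (X b) ≤ _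
        rw [TVaR_low (X b) hbIcc.1 hb1 ⟨hα0, hα1⟩ (by linarith) (hq b ⟨hbIcc.1, hb1⟩)]
        have := bound_mid_low hσ h13 hh hbIcc.1 hb1 (by linarith)
        linarith
    · rw [max_eq_left (by linarith : 1 - α ≤ α)]
      apply IsGreatest.csSup_eq
      constructor
      · refine ⟨1/2, ⟨le_refl _, by linarith⟩, ?_⟩
        show TVaR α (X (1/2)) = _
        rw [TVaR_high (X (1/2)) (le_refl _) ⟨hα0, hα1⟩ (by linarith : (1/2:ℝ) ≤ α)
          (hq _ ⟨le_refl _, by norm_num⟩)]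
        exact value_mid_high hσ hα1
      · rintro y ⟨b, hbIcc, rfl⟩
        have hb2 : b ≤ α := hbIcc.2
        have hb1 : b < 1 := by linarith
        show TVaR α (X b) ≤ _
        rw [TVaR_high (X b) hbIcc.1 ⟨hα0, hα1⟩ hb2 (hq b ⟨hbIcc.1, hb1⟩)]
        have := bound_mid_high hσ hh.le h23.le hα1 hbIcc.1 hb1 hb2
        linarith
  · -- 2/3 ≤ α
    intro h23
    rw [max_eq_left (by linarith : 1 - α ≤ α)]
    apply IsGreatest.csSup_eq
    constructor
    · refine ⟨(3*α-1)/2, ⟨by linarith, by linarith⟩, ?_⟩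
      show TVaR α (X ((3*α-1)/2)) = _
      rw [TVaR_high (X ((3*α-1)/2)) (by linarith) ⟨hα0, hα1⟩ (by linarith)
        (hq _ ⟨by linarith, by linarith⟩)]
      exact value_high hσ h23 hα1
    · rintro y ⟨b, hbIcc, rfl⟩
      have hb2 : b ≤ α := hbIcc.2
      have hb1 : b < 1 := by linarith
      show TVaR α (X b) ≤ _
      rw [TVaR_high (X b) hbIcc.1 ⟨hα0, hα1⟩ hb2 (hq b ⟨hbIcc.1, hb1⟩)]
      have := bound_high hσ hα0 hα1 hbIcc.1 hb1 hb2
      linarith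
end
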